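/- Fix an integer d ≥ 1 and a constant C > 0, and define H(x,R) = ∫_{B(x,R)} ‖y‖ e^{−‖y‖²/C} dy for x ∈ ℝ^d and R > 0. Then there exists a constant C' depending only on d and C such that for every R ≥ 1, ∑_{k=0}^∞ max(k^{d−1}, 1) · sup_{x ∈ S_k} H(x,R) ≤ C' R^d. -/

import Mathlib

open MeasureTheory

private lemma aux_gauss_integrable (d : ℕ) {b : ℝ} (hb : 0 < b) :
    Integrable (fun v : EuclideanSpace ℝ (Fin d) => Real.exp (-b * ‖v‖ ^ 2)) := by
  have h := (GaussianFourier.integrable_cexp_neg_mul_sq_norm_add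
    (V := EuclideanSpace ℝ (Fin d)) (b := (b : ℂ)) (by simpa using hb) 0 0).norm
  refine h.congr (Filter.Eventually.of_forall fun v => ?_)
  have hz : (-(b:ℂ) * (‖v‖:ℂ) ^ 2 + 0 * ((inner ℝ (0 : EuclideanSpace ℝ (Fin d)) v : ℝ) : ℂ))
      = ((-b * ‖v‖ ^ 2 : ℝ) : ℂ) := by push_cast; ring
  simp only [Complex.norm_exp, hz, Complex.ofReal_re]

/-- With `H(x,R) = ∫_{B(x,R)} ‖y‖ e^{−‖y‖²/C} dy` and annuli
`S_k = B(0,k+1) \ B(0,k)` (so `S_0 = B(0,1)`), there is a constant `C'`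
(depending only on `d` and `C`) such that for every `R ≥ 1`,
`∑_{k=0}^∞ max(k^{d−1},1) · sup_{x ∈ S_k} H(x,R) ≤ C' R^d`. -/
theorem stmt_1 (d : ℕ) (hd : 1 ≤ d) (C : ℝ) (hC : 0 < C) :
    ∃ C' : ℝ, 0 < C' ∧ ∀ R : ℝ, 1 ≤ R →
      (∑' k : ℕ, max ((k : ℝ) ^ (d - 1)) 1 *
        ⨆ x ∈ (Metric.ball (0 : EuclideanSpace ℝ (Fin d)) (k + 1) \ Metric.ball 0 k),
          ∫ y in Metric.ball x R, ‖y‖ * Real.exp (-‖y‖ ^ 2 / C)) ≤ C' * R ^ d := by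
  classical
  set φ : EuclideanSpace ℝ (Fin d) → ℝ := fun y => ‖y‖ * Real.exp (-‖y‖ ^ 2 / C) with hφdef
  have hC0 : (C : ℝ) ≠ 0 := hC.ne'
  -- integrability of Gaussians
  have hg2 : Integrable (fun y : EuclideanSpace ℝ (Fin d) => Real.exp (-‖y‖ ^ 2 / (2 * C))) := by
    refine (aux_gauss_integrable d (b := 1 / (2 * C)) (by positivity)).congr
      (Filter.Eventually.of_forall fun v => ?_)
    show Real.exp (-(1 / (2 * C)) * ‖v‖ ^ 2) = Real.exp (-‖v‖ ^ 2 / (2 * C))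
    congr 1; ring
  have hg4 : Integrable (fun y : EuclideanSpace ℝ (Fin d) => Real.exp (-‖y‖ ^ 2 / (4 * C))) := by
    refine (aux_gauss_integrable d (b := 1 / (4 * C)) (by positivity)).congr
      (Filter.Eventually.of_forall fun v => ?_)
    show Real.exp (-(1 / (4 * C)) * ‖v‖ ^ 2) = Real.exp (-‖v‖ ^ 2 / (4 * C))
    congr 1; ring
  -- key pointwise bound
  have hkey : ∀ y : EuclideanSpace ℝ (Fin d), φ y ≤ (1 + 2 * C) * Real.exp (-‖y‖ ^ 2 / (2 * C)) := by
    intro y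
    set r : ℝ := ‖y‖ with hr
    have hr0 : 0 ≤ r := norm_nonneg y
    have hu0 : 0 ≤ r ^ 2 / (2 * C) := by positivity
    have hexp : 0 ≤ Real.exp (r ^ 2 / (2 * C)) - r ^ 2 / (2 * C) - 1 := by
      linarith [Real.add_one_le_exp (r ^ 2 / (2 * C))]
    have hu : 2 * C * (r ^ 2 / (2 * C)) = r ^ 2 := by field_simp
    have h1 : r ≤ (1 + 2 * C) * Real.exp (r ^ 2 / (2 * C)) := by
      nlinarith [mul_nonneg (by linarith : (0:ℝ) ≤ 2 * C) hexp, sq_nonneg (r - 1)]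
    calc r * Real.exp (-r ^ 2 / C)
        ≤ ((1 + 2 * C) * Real.exp (r ^ 2 / (2 * C))) * Real.exp (-r ^ 2 / C) :=
          mul_le_mul_of_nonneg_right h1 (Real.exp_pos _).le
      _ = (1 + 2 * C) * Real.exp (-r ^ 2 / (2 * C)) := by
          rw [mul_assoc, ← Real.exp_add]
          congr 2
          field_simp; ring
  have hφ_nonneg : ∀ y : EuclideanSpace ℝ (Fin d), 0 ≤ φ y := fun y => by positivity
  have hφ : Integrable φ := by
    refine (hg2.const_mul (1 + 2 * C)).mono' ?_ ?_
    · exact (continuous_norm.mul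
        (Real.continuous_exp.comp (by fun_prop))).aestronglyMeasurable
    · refine Filter.Eventually.of_forall fun y => ?_
      rw [Real.norm_eq_abs, abs_of_nonneg (hφ_nonneg y)]
      exact hkey y
  set M : ℝ := ∫ y : EuclideanSpace ℝ (Fin d), φ y with hM
  have hM0 : 0 ≤ M := integral_nonneg hφ_nonneg
  set G : ℝ := ∫ y : EuclideanSpace ℝ (Fin d), Real.exp (-‖y‖ ^ 2 / (4 * C)) with hG
  have hG0 : 0 ≤ G := integral_nonneg fun y => (Real.exp_pos _).le
  set M₂ : ℝ := (1 + 2 * C) * G with hM₂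
  have hM₂0 : 0 ≤ M₂ := mul_nonneg (by linarith) hG0
  -- bound A: any ball integral is at most M
  have hA : ∀ (x : EuclideanSpace ℝ (Fin d)) (R : ℝ), (∫ y in Metric.ball x R, φ y) ≤ M :=
    fun x R => setIntegral_le_integral hφ (Filter.Eventually.of_forall hφ_nonneg)
  have hball_nonneg : ∀ (x : EuclideanSpace ℝ (Fin d)) (R : ℝ), 0 ≤ ∫ y in Metric.ball x R, φ y :=
    fun x R => setIntegral_nonneg measurableSet_ball fun y _ => hφ_nonneg y
  -- weights
  set w : ℕ → ℝ := fun k => max ((k : ℝ) ^ (d - 1)) 1 with hw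
  have hw0 : ∀ k, 0 ≤ w k := fun k => le_trans zero_le_one (le_max_right _ _)
  have hwle : ∀ k, w k ≤ (k : ℝ) ^ (d - 1) + 1 := fun k =>
    max_le (le_add_of_nonneg_right zero_le_one)
      (le_add_of_nonneg_left (by positivity))
  -- summability of the weighted Gaussian sequence
  set Ek : ℕ → ℝ := fun k => Real.exp (-(k : ℝ) ^ 2 / (16 * C)) with hEk
  have hEk0 : ∀ k, 0 ≤ Ek k := fun k => (Real.exp_pos _).le
  have hS : Summable (fun k : ℕ => w k * Ek k) := by
    set r : ℝ := Real.exp (-(1 / (16 * C))) with hrdef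
    have hr0 : 0 ≤ r := (Real.exp_pos _).le
    have hr1 : r < 1 := by
      rw [hrdef, ← Real.exp_zero]
      exact Real.exp_lt_exp.2 (neg_lt_zero.2 (by positivity))
    have hgeo : Summable (fun k : ℕ => ((k : ℝ) ^ (d - 1) + 1) * r ^ k) := by
      have h1 : Summable (fun k : ℕ => (k : ℝ) ^ (d - 1) * r ^ k) :=
        summable_pow_mul_geometric_of_norm_lt_one (d - 1)
          (by rwa [Real.norm_eq_abs, abs_of_nonneg hr0])
      have h2 : Summable (fun k : ℕ => r ^ k) := summable_geometric_of_lt_one hr0 hr1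
      simpa [add_mul] using h1.add h2
    refine Summable.of_nonneg_of_le (fun k => mul_nonneg (hw0 k) (hEk0 k))
      (fun k => ?_) hgeo
    have hEkle : Ek k ≤ r ^ k := by
      rw [hrdef, ← Real.exp_nat_mul]
      apply Real.exp_le_exp.2
      have hk2 : (k : ℝ) ≤ (k : ℝ) ^ 2 := by
        rcases Nat.eq_zero_or_pos k with h | h
        · simp [h]
        · have h1k : (1 : ℝ) ≤ (k : ℝ) := by exact_mod_cast h
          nlinarith
      have hrw : (k : ℝ) * -(1 / (16 * C)) = -(k : ℝ) / (16 * C) := by ring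
      rw [hrw]
      exact (div_le_div_iff_of_pos_right (by positivity)).2 (neg_le_neg hk2)
    exact mul_le_mul (hwle k) hEkle (hEk0 k) (by positivity)
  set S : ℝ := ∑' k : ℕ, w k * Ek k with hSdef
  have hS0 : 0 ≤ S := tsum_nonneg fun k => mul_nonneg (hw0 k) (hEk0 k)
  -- the constant
  refine ⟨3 * 2 ^ (d - 1) * M + M₂ * S + 1, by positivity, fun R hR => ?_⟩
  have hR0 : (0 : ℝ) < R := lt_of_lt_of_le one_pos hR
  set N : ℕ := ⌈2 * R⌉₊ with hN
  -- bound B: tail bound for x outside ball of radius k, k ≥ 2R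
  have hB : ∀ (k : ℕ), 2 * R ≤ (k : ℝ) → ∀ x : EuclideanSpace ℝ (Fin d), (k : ℝ) ≤ ‖x‖ →
      (∫ y in Metric.ball x R, φ y) ≤ M₂ * Ek k := by
    intro k hk x hx
    have hball : ∀ y ∈ Metric.ball x R, (k : ℝ) / 2 ≤ ‖y‖ := by
      intro y hy
      have hd1 : dist y x < R := Metric.mem_ball.1 hy
      have h2 : ‖x‖ - ‖y‖ ≤ dist y x := by
        rw [dist_eq_norm]
        calc ‖x‖ - ‖y‖ ≤ ‖x - y‖ := by
              have := norm_sub_norm_le x y; linarith [norm_sub_norm_le x y]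
          _ = ‖y - x‖ := (norm_sub_rev x y)
      linarith
    have hpt : ∀ y ∈ Metric.ball x R,
        φ y ≤ ((1 + 2 * C) * Ek k) * Real.exp (-‖y‖ ^ 2 / (4 * C)) := by
      intro y hy
      have hy2 : (k : ℝ) ^ 2 / 4 ≤ ‖y‖ ^ 2 := by
        have h1 := hball y hy
        have h2 : ((k : ℝ) / 2) ^ 2 ≤ ‖y‖ ^ 2 := by
          apply pow_le_pow_left₀ (by positivity) h1
        nlinarith [h2]
      have hsplit : Real.exp (-‖y‖ ^ 2 / (2 * C))
          = Real.exp (-‖y‖ ^ 2 / (4 * C)) * Real.exp (-‖y‖ ^ 2 / (4 * C)) := by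
        rw [← Real.exp_add]; congr 1; field_simp; ring
      have hfac : Real.exp (-‖y‖ ^ 2 / (4 * C)) ≤ Ek k := by
        apply Real.exp_le_exp.2
        have : -(k : ℝ) ^ 2 / (16 * C) = -((k : ℝ) ^ 2 / 4) / (4 * C) := by
          ring
        rw [this]
        exact (div_le_div_iff_of_pos_right (by positivity)).2 (neg_le_neg hy2)
      calc φ y ≤ (1 + 2 * C) * Real.exp (-‖y‖ ^ 2 / (2 * C)) := hkey y
        _ = (1 + 2 * C) * (Real.exp (-‖y‖ ^ 2 / (4 * C)) * Real.exp (-‖y‖ ^ 2 / (4 * C))) := by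
            rw [hsplit]
        _ ≤ (1 + 2 * C) * (Ek k * Real.exp (-‖y‖ ^ 2 / (4 * C))) := by
            apply mul_le_mul_of_nonneg_left _ (by linarith : (0:ℝ) ≤ 1 + 2 * C)
            exact mul_le_mul_of_nonneg_right hfac (Real.exp_pos _).le
        _ = ((1 + 2 * C) * Ek k) * Real.exp (-‖y‖ ^ 2 / (4 * C)) := by ring
    calc (∫ y in Metric.ball x R, φ y)
        ≤ ∫ y in Metric.ball x R,
            ((1 + 2 * C) * Ek k) * Real.exp (-‖y‖ ^ 2 / (4 * C)) :=
          setIntegral_mono_on hφ.integrableOn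
            ((hg4.const_mul _).integrableOn) measurableSet_ball hpt
      _ ≤ ∫ y : EuclideanSpace ℝ (Fin d), ((1 + 2 * C) * Ek k) * Real.exp (-‖y‖ ^ 2 / (4 * C)) :=
          setIntegral_le_integral (hg4.const_mul _)
            (Filter.Eventually.of_forall fun y => by positivity)
      _ = M₂ * Ek k := by
          rw [integral_const_mul]
          rw [hM₂]; ring
  -- the summand
  set f : ℕ → ℝ := fun k => w k *
      ⨆ x ∈ (Metric.ball (0 : EuclideanSpace ℝ (Fin d)) ((k : ℝ) + 1) \ Metric.ball 0 (k : ℝ)),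
        ∫ y in Metric.ball x R, φ y with hfdef
  have hsup_nonneg : ∀ k : ℕ, 0 ≤
      ⨆ x ∈ (Metric.ball (0 : EuclideanSpace ℝ (Fin d)) ((k : ℝ) + 1) \ Metric.ball 0 (k : ℝ)),
        ∫ y in Metric.ball x R, φ y := by
    intro k
    exact Real.iSup_nonneg fun x => Real.iSup_nonneg fun _ => hball_nonneg x R
  have hf0 : ∀ k, 0 ≤ f k := fun k => mul_nonneg (hw0 k) (hsup_nonneg k)
  have hsupA : ∀ k : ℕ,
      (⨆ x ∈ (Metric.ball (0 : EuclideanSpace ℝ (Fin d)) ((k : ℝ) + 1) \ Metric.ball 0 (k : ℝ)),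
        ∫ y in Metric.ball x R, φ y) ≤ M := by
    intro k
    exact Real.iSup_le (fun x => Real.iSup_le (fun _ => hA x R) hM0) hM0
  have hsupB : ∀ k : ℕ, N ≤ k →
      (⨆ x ∈ (Metric.ball (0 : EuclideanSpace ℝ (Fin d)) ((k : ℝ) + 1) \ Metric.ball 0 (k : ℝ)),
        ∫ y in Metric.ball x R, φ y) ≤ M₂ * Ek k := by
    intro k hk
    have hbnd0 : 0 ≤ M₂ * Ek k := mul_nonneg hM₂0 (hEk0 k)
    refine Real.iSup_le (fun x => Real.iSup_le (fun hx => ?_) hbnd0) hbnd0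
    have hx2 : (k : ℝ) ≤ ‖x‖ := by
      have := hx.2
      rw [Metric.mem_ball, dist_zero_right] at this
      exact not_lt.1 this
    have h2R : 2 * R ≤ (k : ℝ) := by
      calc 2 * R ≤ (N : ℝ) := Nat.le_ceil _
        _ ≤ (k : ℝ) := by exact_mod_cast hk
    exact hB k h2R x hx2
  -- comparison sequence
  set h : ℕ → ℝ := fun k => if k < N then w k * M else M₂ * (w k * Ek k) with hhdef
  have hfh : ∀ k, f k ≤ h k := by
    intro k
    simp only [hhdef]
    by_cases hkN : k < N
    · rw [if_pos hkN]
      exact mul_le_mul_of_nonneg_left (hsupA k) (hw0 k)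
    · rw [if_neg hkN]
      calc f k ≤ w k * (M₂ * Ek k) :=
            mul_le_mul_of_nonneg_left (hsupB k (not_lt.1 hkN)) (hw0 k)
        _ = M₂ * (w k * Ek k) := by ring
  have hh1 : Summable (fun k => if k < N then w k * M - M₂ * (w k * Ek k) else 0) := by
    apply summable_of_ne_finset_zero (s := Finset.range N)
    intro k hk
    rw [Finset.mem_range] at hk
    simp [hk]
  have hh2 : Summable (fun k => M₂ * (w k * Ek k)) := hS.mul_left M₂
  have hheq : h = (fun k => if k < N then w k * M - M₂ * (w k * Ek k) else 0)
      + (fun k => M₂ * (w k * Ek k)) := by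
    funext k
    simp only [hhdef, Pi.add_apply]
    by_cases hkN : k < N
    · rw [if_pos hkN, if_pos hkN]; ring
    · rw [if_neg hkN, if_neg hkN]; ring
  have hhsum : Summable h := by rw [hheq]; exact hh1.add hh2
  have hfsum : Summable f := Summable.of_nonneg_of_le hf0 hfh hhsum
  -- estimates for the finite part
  have hNle : (N : ℝ) ≤ 3 * R := by
    have := Nat.ceil_lt_add_one (by positivity : (0:ℝ) ≤ 2 * R)
    have h1 : (N : ℝ) < 2 * R + 1 := this
    linarith
  have hwbound : ∀ k : ℕ, k < N → w k * M ≤ (2 * R) ^ (d - 1) * M := by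
    intro k hk
    have hk2R : (k : ℝ) < 2 * R := Nat.lt_ceil.1 hk
    have h2R1 : (1 : ℝ) ≤ 2 * R := by linarith
    have hwk : w k ≤ (2 * R) ^ (d - 1) := by
      apply max_le
      · exact pow_le_pow_left₀ (Nat.cast_nonneg k) hk2R.le _
      · exact one_le_pow₀ h2R1
    exact mul_le_mul_of_nonneg_right hwk hM0
  have hfin : (∑ k ∈ Finset.range N, (w k * M - M₂ * (w k * Ek k)))
      ≤ (N : ℝ) * ((2 * R) ^ (d - 1) * M) := by
    calc (∑ k ∈ Finset.range N, (w k * M - M₂ * (w k * Ek k)))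
        ≤ ∑ k ∈ Finset.range N, w k * M := by
          apply Finset.sum_le_sum
          intro k _
          have : 0 ≤ M₂ * (w k * Ek k) :=
            mul_nonneg hM₂0 (mul_nonneg (hw0 k) (hEk0 k))
          linarith
      _ ≤ ∑ k ∈ Finset.range N, (2 * R) ^ (d - 1) * M := by
          apply Finset.sum_le_sum
          intro k hk
          exact hwbound k (Finset.mem_range.1 hk)
      _ = (N : ℝ) * ((2 * R) ^ (d - 1) * M) := by
          rw [Finset.sum_const, Finset.card_range, nsmul_eq_mul]
  -- put everything together
  have htsum_h : ∑' k, h k ≤ (N : ℝ) * ((2 * R) ^ (d - 1) * M) + M₂ * S := by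
    rw [hheq]
    simp only [Pi.add_apply]
    rw [Summable.tsum_add hh1 hh2]
    have e1 : (∑' k, (if k < N then w k * M - M₂ * (w k * Ek k) else 0))
        = ∑ k ∈ Finset.range N, (w k * M - M₂ * (w k * Ek k)) := by
      rw [tsum_eq_sum (s := Finset.range N)]
      · apply Finset.sum_congr rfl
        intro k hk
        rw [if_pos (Finset.mem_range.1 hk)]
      · intro k hk
        rw [if_neg (fun h => hk (Finset.mem_range.2 h))]
    have e2 : (∑' k, M₂ * (w k * Ek k)) = M₂ * S := by
      rw [tsum_mul_left]
    rw [e1, e2]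
    exact add_le_add_left hfin _
  have hRd1 : (1 : ℝ) ≤ R ^ d := one_le_pow₀ hR
  have hRd : R ^ (d - 1) * R = R ^ d := by
    rw [← pow_succ]
    congr 1
    omega
  have hmain : ∑' k, f k ≤ 3 * 2 ^ (d - 1) * M * R ^ d + M₂ * S := by
    calc ∑' k, f k ≤ ∑' k, h k := Summable.tsum_le_tsum hfh hfsum hhsum
      _ ≤ (N : ℝ) * ((2 * R) ^ (d - 1) * M) + M₂ * S := htsum_h
      _ ≤ (3 * R) * ((2 * R) ^ (d - 1) * M) + M₂ * S := by
          apply add_le_add_left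
          apply mul_le_mul_of_nonneg_right hNle (by positivity)
      _ = 3 * 2 ^ (d - 1) * M * (R ^ (d - 1) * R) + M₂ * S := by
          rw [mul_pow]; ring
      _ = 3 * 2 ^ (d - 1) * M * R ^ d + M₂ * S := by rw [hRd]
  have hfinal : ∑' k, f k ≤ (3 * 2 ^ (d - 1) * M + M₂ * S + 1) * R ^ d := by
    calc ∑' k, f k ≤ 3 * 2 ^ (d - 1) * M * R ^ d + M₂ * S := hmain
      _ ≤ 3 * 2 ^ (d - 1) * M * R ^ d + (M₂ * S) * R ^ d := by
          apply add_le_add_right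
          nlinarith [mul_nonneg hM₂0 hS0]
      _ ≤ (3 * 2 ^ (d - 1) * M + M₂ * S + 1) * R ^ d := by
          have hRdpos : (0:ℝ) < R ^ d := by positivity
          nlinarith
  exact hfinal
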